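/- Let A₁ be a NO set and A₂ be an AO set in G, with A₁ and A₂ disjoint, and suppose A₂ is x̄_{A₁}-AO in G. Then for any pattern p, N(G*)p = 𝟏 if and only if N(G)p = x̄_{A₁}. Moreover, A₁ is NO and A₂ is AO in G*, and ν(G*) = ν(G). -/

import Mathlib

open Matrix
open scoped Classical

/-- The closed neighborhood matrix of a simple graph over `ℤ₂`:
`N(G) u v = 1` iff `u = v` or `u` is adjacent to `v`. -/
noncomputable def nbhdMatrix {V : Type*} [Fintype V] (G : SimpleGraph V) :
    Matrix V V (ZMod 2) :=
  Matrix.of fun u v => if u = v ∨ G.Adj u v then 1 else 0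

/-- The nullity of a matrix over `ℤ₂`: the dimension of its kernel. -/
noncomputable def nullityM {V : Type*} [Fintype V] (M : Matrix V V (ZMod 2)) : ℕ :=
  Module.finrank (ZMod 2) (LinearMap.ker M.mulVecLin)

/-- The nullity `ν(G)` of a graph. -/
noncomputable def graphNullity {V : Type*} [Fintype V] (G : SimpleGraph V) : ℕ :=
  nullityM (nbhdMatrix G)

/-- Characteristic vector of a set of vertices. -/
noncomputable def chi {V : Type*} (A : Set V) : V → ZMod 2 :=
  fun v => if v ∈ A then 1 else 0

/-- A configuration `c` is solvable (w.r.t. the matrix `M`) if `M p = c` for some pattern `p`. -/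
def Solv {V : Type*} [Fintype V] (M : Matrix V V (ZMod 2)) (c : V → ZMod 2) : Prop :=
  ∃ p : V → ZMod 2, M.mulVec p = c

/-- `A` is `c`-always odd activated: `A` is solvable and `x_A · p = 1` for every solving
pattern `p` for `c`. -/
def cAO {V : Type*} [Fintype V] (M : Matrix V V (ZMod 2)) (c : V → ZMod 2)
    (A : Set V) : Prop :=
  Solv M (chi A) ∧ ∀ p : V → ZMod 2, M.mulVec p = c → chi A ⬝ᵥ p = 1

/-- `A` is `c`-never odd activated: `A` is solvable and `x_A · p = 0` for every solving
pattern `p` for `c`. -/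
def cNO {V : Type*} [Fintype V] (M : Matrix V V (ZMod 2)) (c : V → ZMod 2)
    (A : Set V) : Prop :=
  Solv M (chi A) ∧ ∀ p : V → ZMod 2, M.mulVec p = c → chi A ⬝ᵥ p = 0

/-- `A` is always odd activated (AO): `𝟏`-always odd activated. -/
def AO {V : Type*} [Fintype V] (M : Matrix V V (ZMod 2)) (A : Set V) : Prop :=
  cAO M 1 A

/-- `A` is never odd activated (NO): `𝟏`-never odd activated. -/
def NO {V : Type*} [Fintype V] (M : Matrix V V (ZMod 2)) (A : Set V) : Prop :=
  cNO M 1 A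

/-- `A` is half odd activated (HO): `x_A` is not solvable. -/
def HO {V : Type*} [Fintype V] (M : Matrix V V (ZMod 2)) (A : Set V) : Prop :=
  ¬ Solv M (chi A)

/-- The closed neighborhood matrix of the graph `G*` obtained from `G` by toggling every
pair of vertices between the disjoint sets `A₁` and `A₂`:
`N(G*) = N(G) + x_{A₁} x_{A₂}ᵗ + x_{A₂} x_{A₁}ᵗ` over `ℤ₂`. -/
noncomputable def starMatrix {V : Type*} [Fintype V] (G : SimpleGraph V)
    (A₁ A₂ : Set V) : Matrix V V (ZMod 2) :=
  nbhdMatrix G + Matrix.vecMulVec (chi A₁) (chi A₂) + Matrix.vecMulVec (chi A₂) (chi A₁)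

section Aux
variable {V : Type*} [Fintype V]

lemma z2_mul_self (x : ZMod 2) : x * x = x := by revert x; decide

lemma z2_add_self (x : ZMod 2) : x + x = 0 := by revert x; decide

lemma symm_pair (M : Matrix V V (ZMod 2)) (hM : Mᵀ = M) (x y : V → ZMod 2) :
    x ⬝ᵥ (M *ᵥ y) = (M *ᵥ x) ⬝ᵥ y := by
  rw [Matrix.dotProduct_mulVec, ← Matrix.mulVec_transpose, hM]

lemma quad_diag (M : Matrix V V (ZMod 2)) (hM : Mᵀ = M) (y : V → ZMod 2) :
    y ⬝ᵥ (M *ᵥ y) = ∑ i, M i i * y i := by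
  classical
  have hsym : ∀ i j, M j i = M i j := fun i j => congrFun (congrFun hM i) j
  have h1 : y ⬝ᵥ (M *ᵥ y)
      = ∑ p ∈ Finset.univ ×ˢ (Finset.univ : Finset V), y p.1 * (M p.1 p.2 * y p.2) := by
    rw [Finset.sum_product]
    simp [dotProduct, Matrix.mulVec, Finset.mul_sum]
  have hoff : ∑ p ∈ (Finset.univ : Finset V).offDiag, y p.1 * (M p.1 p.2 * y p.2) = 0 := by
    refine Finset.sum_involution (fun a _ => Prod.swap a) (fun a ha => ?_) (fun a ha h => ?_)
      (fun a ha => ?_) (fun a ha => Prod.swap_swap a)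
    · have : y a.2 * (M a.2 a.1 * y a.1) = y a.1 * (M a.1 a.2 * y a.2) := by
        rw [hsym]; ring
      rw [Prod.fst_swap, Prod.snd_swap, this, z2_add_self]
    · have hne : a.1 ≠ a.2 := (Finset.mem_offDiag.mp ha).2.2
      intro hsw
      exact hne (congrArg Prod.snd hsw)
    · rcases Finset.mem_offDiag.mp ha with ⟨-, -, hne⟩
      exact Finset.mem_offDiag.mpr ⟨Finset.mem_univ _, Finset.mem_univ _, fun h => hne h.symm⟩
  have h2 : ∑ p ∈ (Finset.univ : Finset V).diag, y p.1 * (M p.1 p.2 * y p.2)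
      = ∑ i, M i i * y i := by
    rw [Finset.sum_diag]
    exact Finset.sum_congr rfl fun i _ => by rw [← mul_assoc, mul_comm (y i), mul_assoc,
      z2_mul_self]
  rw [h1, ← Finset.diag_union_offDiag, Finset.sum_union (Finset.disjoint_diag_offDiag _),
    hoff, add_zero, h2]

end Aux

section Aux2
variable {V : Type*} [Fintype V]

lemma vecMulVec_mulVec' (u v p : V → ZMod 2) :
    (Matrix.vecMulVec u v) *ᵥ p = (v ⬝ᵥ p) • u := by
  funext i
  simp [Matrix.mulVec, Matrix.vecMulVec_apply, dotProduct, Finset.sum_mul, Finset.mul_sum,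
    mul_comm, mul_assoc, mul_left_comm]

lemma solv_of_ker (M : Matrix V V (ZMod 2)) (hM : Mᵀ = M) (c : V → ZMod 2)
    (h : ∀ y, M *ᵥ y = 0 → c ⬝ᵥ y = 0) : Solv M c := by
  classical
  set B : LinearMap.BilinForm (ZMod 2) (V → ZMod 2) :=
    Matrix.toBilin' (1 : Matrix V V (ZMod 2)) with hB
  have hBapp : ∀ x y : V → ZMod 2, B x y = x ⬝ᵥ y := fun x y => by
    rw [hB, Matrix.toBilin'_apply', Matrix.one_mulVec]
  have hrefl : B.IsRefl := fun x y hxy => by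
    rw [hBapp] at hxy ⊢; rwa [dotProduct_comm]
  have hnd : B.Nondegenerate :=
    Matrix.Nondegenerate.toBilin' (Matrix.nondegenerate_of_det_ne_zero (by simp))
  have horth : B.orthogonal (LinearMap.range M.mulVecLin) = LinearMap.ker M.mulVecLin := by
    ext y
    rw [LinearMap.BilinForm.mem_orthogonal_iff, LinearMap.mem_ker]
    constructor
    · intro hy
      have key : ∀ p : V → ZMod 2, p ⬝ᵥ (M *ᵥ y) = 0 := by
        intro p
        have h2 := hy (M *ᵥ p) ⟨p, Matrix.mulVecLin_apply M p⟩
        rw [hBapp] at h2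
        rw [symm_pair M hM p y]
        exact h2
      rw [Matrix.mulVecLin_apply]
      funext i
      have := key (Pi.single i 1)
      rwa [single_dotProduct, one_mul] at this
    · rintro hy n ⟨p, rfl⟩
      rw [hBapp, Matrix.mulVecLin_apply, ← symm_pair M hM p y]
      rw [Matrix.mulVecLin_apply] at hy
      rw [hy, dotProduct_zero]
  have hoo := LinearMap.BilinForm.orthogonal_orthogonal hnd hrefl (LinearMap.range M.mulVecLin)
  rw [horth] at hoo
  have hc : c ∈ B.orthogonal (LinearMap.ker M.mulVecLin) := by
    intro n hn
    rw [LinearMap.mem_ker, Matrix.mulVecLin_apply] at hn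
    rw [hBapp, dotProduct_comm]
    exact h n hn
  rw [hoo] at hc
  obtain ⟨p, hp⟩ := hc
  exact ⟨p, by rw [← Matrix.mulVecLin_apply]; exact hp⟩

end Aux2



section Aux3
variable {V : Type*} [Fintype V]

lemma vec_cancel {x y u : V → ZMod 2} (h : x + u = y) : x = y + u := by
  rw [← h]; funext i
  simp only [Pi.add_apply]
  rw [add_assoc, z2_add_self, add_zero]

end Aux3

/-- Proposition (NO, AO, `x̄_{A₁}`-AO): the odd dominating patterns of `G*` are exactly
the solving patterns of `x̄_{A₁}` in `G`; in `G*`, `A₁` is NO and `A₂` is AO, and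
`ν(G*) = ν(G)`. -/
theorem stmt13 {V : Type*} [Fintype V] (G : SimpleGraph V) (A₁ A₂ : Set V)
    (hd : Disjoint A₁ A₂)
    (h1 : NO (nbhdMatrix G) A₁) (h2 : AO (nbhdMatrix G) A₂)
    (h3 : cAO (nbhdMatrix G) (chi A₁ + 1) A₂) :
    (∀ p : V → ZMod 2, (starMatrix G A₁ A₂).mulVec p = 1 ↔
      (nbhdMatrix G).mulVec p = chi A₁ + 1) ∧
    NO (starMatrix G A₁ A₂) A₁ ∧ AO (starMatrix G A₁ A₂) A₂ ∧
    nullityM (starMatrix G A₁ A₂) = nullityM (nbhdMatrix G) := by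
  classical
  have hN : (nbhdMatrix G)ᵀ = nbhdMatrix G := by
    ext i j
    simp only [Matrix.transpose_apply, nbhdMatrix, Matrix.of_apply]
    have h0 : (j = i ∨ G.Adj j i) ↔ (i = j ∨ G.Adj i j) := by
      rw [G.adj_comm, eq_comm]
    exact if_congr h0 rfl rfl
  have quadN : ∀ y : V → ZMod 2, y ⬝ᵥ (nbhdMatrix G *ᵥ y) = (1 : V → ZMod 2) ⬝ᵥ y := by
    intro y
    rw [quad_diag (nbhdMatrix G) hN]
    simp [nbhdMatrix, dotProduct]
  obtain ⟨q₁, hq₁⟩ := h1.1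
  obtain ⟨q₂, hq₂⟩ := h2.1
  have dq1 : ∀ p : V → ZMod 2, chi A₁ ⬝ᵥ p = q₁ ⬝ᵥ (nbhdMatrix G *ᵥ p) := by
    intro p; rw [symm_pair (nbhdMatrix G) hN q₁ p, hq₁]
  have dq2 : ∀ p : V → ZMod 2, chi A₂ ⬝ᵥ p = q₂ ⬝ᵥ (nbhdMatrix G *ᵥ p) := by
    intro p; rw [symm_pair (nbhdMatrix G) hN q₂ p, hq₂]
  -- Sutner: the all-ones configuration is solvable
  have hone : Solv (nbhdMatrix G) 1 := by
    refine solv_of_ker (nbhdMatrix G) hN 1 (fun y hy => ?_)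
    have := quadN y
    rw [hy, dotProduct_zero] at this
    exact this.symm
  obtain ⟨r, hr⟩ := hone
  -- the scalar constants
  have hs1 : q₁ ⬝ᵥ (1 : V → ZMod 2) = 0 := by
    have h0 := h1.2 r hr
    rw [dq1 r, hr] at h0
    exact h0
  have hs2 : q₂ ⬝ᵥ (1 : V → ZMod 2) = 1 := by
    have h0 := h2.2 r hr
    rw [dq2 r, hr] at h0
    exact h0
  have ha11 : q₁ ⬝ᵥ chi A₁ = 0 := by
    rw [← hq₁]
    show q₁ ⬝ᵥ (nbhdMatrix G *ᵥ q₁) = 0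
    rw [quadN q₁, dotProduct_comm]
    exact hs1
  have ha22 : q₂ ⬝ᵥ chi A₂ = 1 := by
    rw [← hq₂]
    show q₂ ⬝ᵥ (nbhdMatrix G *ᵥ q₂) = 1
    rw [quadN q₂, dotProduct_comm]
    exact hs2
  have ha12 : q₁ ⬝ᵥ chi A₂ = 0 := by
    have hsolve : nbhdMatrix G *ᵥ (q₁ + r) = chi A₁ + 1 := by
      rw [Matrix.mulVec_add]
      show nbhdMatrix G *ᵥ q₁ + nbhdMatrix G *ᵥ r = chi A₁ + 1
      rw [hq₁, hr]
    have h0 := h3.2 (q₁ + r) hsolve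
    rw [dotProduct_add, h2.2 r hr] at h0
    rw [dotProduct_comm]
    linear_combination h0
  have ha21 : q₂ ⬝ᵥ chi A₁ = 0 := by
    rw [← hq₁]
    show q₂ ⬝ᵥ (nbhdMatrix G *ᵥ q₁) = 0
    rw [symm_pair (nbhdMatrix G) hN q₂ q₁, hq₂, dotProduct_comm]
    exact ha12
  have hc11 : chi A₁ ⬝ᵥ q₁ = 0 := by rw [dotProduct_comm]; exact ha11
  have hc21 : chi A₂ ⬝ᵥ q₁ = 0 := by rw [dotProduct_comm]; exact ha12
  have hc12 : chi A₁ ⬝ᵥ q₂ = 0 := by rw [dotProduct_comm]; exact ha21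
  have hc22 : chi A₂ ⬝ᵥ q₂ = 1 := by rw [dotProduct_comm]; exact ha22
  -- the action of the star matrix
  have hstar : ∀ p : V → ZMod 2, starMatrix G A₁ A₂ *ᵥ p
      = nbhdMatrix G *ᵥ p + (chi A₂ ⬝ᵥ p) • chi A₁ + (chi A₁ ⬝ᵥ p) • chi A₂ := by
    intro p
    rw [starMatrix, Matrix.add_mulVec, Matrix.add_mulVec, vecMulVec_mulVec', vecMulVec_mulVec']
  -- consequences of N p = chi A₁ + 1
  have hbof : ∀ p : V → ZMod 2, nbhdMatrix G *ᵥ p = chi A₁ + 1 → chi A₁ ⬝ᵥ p = 0 := by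
    intro p hp
    rw [dq1 p, hp, dotProduct_add, ha11, hs1, add_zero]
  -- the main equivalence
  have hiff : ∀ p : V → ZMod 2, starMatrix G A₁ A₂ *ᵥ p = 1 ↔
      nbhdMatrix G *ᵥ p = chi A₁ + 1 := by
    intro p
    constructor
    · intro hp
      have heq : nbhdMatrix G *ᵥ p + (chi A₂ ⬝ᵥ p) • chi A₁ + (chi A₁ ⬝ᵥ p) • chi A₂ = 1 := by
        rw [← hstar p]; exact hp
      have hb : chi A₁ ⬝ᵥ p = 0 := by
        have h7 := congrArg (fun w => q₁ ⬝ᵥ w) heq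
        simp only [dotProduct_add, dotProduct_smul, smul_eq_mul] at h7
        rw [← dq1 p, ha11, ha12, hs1] at h7
        simpa using h7
      have ha : chi A₂ ⬝ᵥ p = 1 := by
        have h7 := congrArg (fun w => q₂ ⬝ᵥ w) heq
        simp only [dotProduct_add, dotProduct_smul, smul_eq_mul] at h7
        rw [← dq2 p, ha21, ha22, hs2, hb] at h7
        simpa using h7
      rw [hb, ha, one_smul, zero_smul, add_zero] at heq
      have := vec_cancel heq
      rw [add_comm] at this
      exact this
    · intro hp
      have ha : chi A₂ ⬝ᵥ p = 1 := h3.2 p hp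
      have hb : chi A₁ ⬝ᵥ p = 0 := hbof p hp
      rw [hstar p, hp, ha, hb, one_smul, zero_smul, add_zero]
      funext i
      simp only [Pi.add_apply, Pi.one_apply]
      rw [add_comm (chi A₁ i) 1, add_assoc, z2_add_self, add_zero]
  refine ⟨hiff, ⟨⟨q₁, ?_⟩, fun p hp => ?_⟩, ⟨⟨q₁ + q₂, ?_⟩, fun p hp => ?_⟩, ?_⟩
  · show starMatrix G A₁ A₂ *ᵥ q₁ = chi A₁
    rw [hstar q₁, hq₁, hc21, hc11, zero_smul, zero_smul, add_zero, add_zero]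
  · exact hbof p ((hiff p).1 hp)
  · show starMatrix G A₁ A₂ *ᵥ (q₁ + q₂) = chi A₂
    rw [hstar (q₁ + q₂), Matrix.mulVec_add]
    show nbhdMatrix G *ᵥ q₁ + nbhdMatrix G *ᵥ q₂ + _ + _ = chi A₂
    rw [hq₁, hq₂, dotProduct_add, dotProduct_add, hc21, hc22, hc11, hc12,
      zero_add, add_zero, one_smul, zero_smul, add_zero]
    funext i
    simp only [Pi.add_apply]
    rw [add_comm (chi A₁ i) (chi A₂ i), add_assoc, z2_add_self, add_zero]
  · exact h3.2 p ((hiff p).1 hp)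
  · have hker : LinearMap.ker (starMatrix G A₁ A₂).mulVecLin
        = LinearMap.ker (nbhdMatrix G).mulVecLin := by
      ext y
      simp only [LinearMap.mem_ker, Matrix.mulVecLin_apply]
      constructor
      · intro hy
        have heq : nbhdMatrix G *ᵥ y + (chi A₂ ⬝ᵥ y) • chi A₁ + (chi A₁ ⬝ᵥ y) • chi A₂ = 0 := by
          rw [← hstar y]; exact hy
        have hb : chi A₁ ⬝ᵥ y = 0 := by
          have h7 := congrArg (fun w => q₁ ⬝ᵥ w) heq
          simp only [dotProduct_add, dotProduct_smul, smul_eq_mul,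
            dotProduct_zero] at h7
          rw [← dq1 y, ha11, ha12] at h7
          simpa using h7
        have ha : chi A₂ ⬝ᵥ y = 0 := by
          have h7 := congrArg (fun w => q₂ ⬝ᵥ w) heq
          simp only [dotProduct_add, dotProduct_smul, smul_eq_mul,
            dotProduct_zero] at h7
          rw [← dq2 y, ha21, ha22, hb] at h7
          simpa using h7
        rw [ha, hb, zero_smul, zero_smul, add_zero, add_zero] at heq
        exact heq
      · intro hy
        have hb : chi A₁ ⬝ᵥ y = 0 := by rw [dq1 y, hy, dotProduct_zero]
        have ha : chi A₂ ⬝ᵥ y = 0 := by rw [dq2 y, hy, dotProduct_zero]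
        rw [hstar y, ha, hb, hy, zero_smul, zero_smul, add_zero, add_zero]
    rw [nullityM, nullityM, hker]
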